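/- Let n ≥ 1 and ω* ≥ 1 be integers with 2ω*−1 ≤ n, let n_s ≥ 1, and let r : Fin n_s → Fin n be injective (n_s distinct sample points). For each k ∈ K_{ω*}, let f^(k) ∈ ℂⁿ be the DFT basis vector with components f^(k)_j = exp(2πi·j·k/n)/√n for j ∈ {0,…,n−1}, and let L_r f^(k) ∈ ℂ^{n_s} be its restriction to the sample points, (L_r f^(k))_i = f^(k)_{r(i)}. Then the family (L_r f^(k))_{k ∈ K_{ω*}} is linearly independent over ℂ if and only if n_s ≥ 2ω*−1. -/

import Mathlib

open scoped BigOperators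

noncomputable section

/-- Low-frequency index set `K_ω ⊆ {0,…,n−1}`. -/
def Kset (n ω : ℕ) : Set (Fin n) := {k | (k : ℕ) ≤ ω - 1 ∨ n - ω + 1 ≤ (k : ℕ)}

/-- The unitary DFT basis vector `f^(k)`, with components
`f^(k)_j = exp(2πi·j·k/n)/√n`. -/
def dftVec (n : ℕ) (k : Fin n) : Fin n → ℂ :=
  fun j => Complex.exp (2 * (Real.pi : ℂ) * Complex.I * ((j : ℕ) : ℂ) * ((k : ℕ) : ℂ) / (n : ℂ))
    / ((Real.sqrt n : ℝ) : ℂ)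

-- membership criterion
lemma Kset_mem_iff (n ω : ℕ) (hω : 1 ≤ ω) (h2 : 2 * ω - 1 ≤ n) (k : Fin n) :
    k ∈ Kset n ω ↔ ((k : ℕ) + (ω - 1)) % n ≤ 2 * ω - 2 := by
  have hk := k.isLt
  rcases lt_or_ge ((k : ℕ) + (ω - 1)) n with h | h
  · rw [Nat.mod_eq_of_lt h]
    simp only [Kset, Set.mem_setOf_eq]
    omega
  · have h2n : (k : ℕ) + (ω - 1) < 2 * n := by omega
    have : ((k : ℕ) + (ω - 1)) % n = (k : ℕ) + (ω - 1) - n := by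
      rw [Nat.mod_eq_sub_mod h, Nat.mod_eq_of_lt (by omega)]
    rw [this]
    simp only [Kset, Set.mem_setOf_eq]
    omega

/-- the restricted DFT family `(L_r f^(k))_{k ∈ K_{ω*}}` is linearly
independent over ℂ iff `n_s ≥ 2ω*−1`. -/
theorem restricted_dft_linearIndependent_iff
    (n ωs ns : ℕ) (hn : 1 ≤ n) (hω : 1 ≤ ωs) (h2 : 2 * ωs - 1 ≤ n) (hns : 1 ≤ ns)
    (r : Fin ns → Fin n) (hr : Function.Injective r) :
    LinearIndependent ℂ
      (fun k : {k : Fin n // k ∈ Kset n ωs} => (fun i : Fin ns => dftVec n k.1 (r i))) ↔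
      2 * ωs - 1 ≤ ns := by
  classical
  haveI : NeZero n := ⟨by omega⟩
  haveI : Fintype {k : Fin n // k ∈ Kset n ωs} := Fintype.ofFinite _
  set c : ℕ := ωs - 1 with hc
  have hcn : c < n := by omega
  -- the shift equivalence
  let cfin : Fin n := ⟨c, hcn⟩
  have hEval : ∀ k : Fin n, ((Equiv.addRight cfin) k : Fin n) = ⟨((k : ℕ) + c) % n, Nat.mod_lt _ (by omega)⟩ := by
    intro k
    simp [Equiv.addRight, Fin.add_def, cfin]
  -- cardinality of the index set
  have hcard : Fintype.card {k : Fin n // k ∈ Kset n ωs} = 2 * ωs - 1 := by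
    haveI : Fintype {j : Fin n // (j : ℕ) ≤ 2 * ωs - 2} := Fintype.ofFinite _
    have e1 : {k : Fin n // k ∈ Kset n ωs} ≃ {j : Fin n // (j : ℕ) ≤ 2 * ωs - 2} :=
      (Equiv.addRight cfin).subtypeEquiv (fun k => by
        rw [hEval k]
        exact Kset_mem_iff n ωs hω h2 k)
    have e2 : {j : Fin n // (j : ℕ) ≤ 2 * ωs - 2} ≃ Fin (2 * ωs - 1) :=
      { toFun := fun j => ⟨(j : Fin n), by omega⟩
        invFun := fun m => ⟨⟨(m : ℕ), by omega⟩, by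
          have := m.isLt; simpa using by omega⟩
        left_inv := fun j => by ext; rfl
        right_inv := fun m => by ext; rfl }
    rw [Fintype.card_congr (e1.trans e2), Fintype.card_fin]
  constructor
  · intro h
    have := h.fintype_card_le_finrank
    rwa [hcard, Module.finrank_pi, Fintype.card_fin] at this
  · intro hle
    rw [Fintype.linearIndependent_iff]
    intro g hg k
    -- sample points on the unit circle
    set z : Fin ns → ℂ := fun i =>
      Complex.exp (2 * (Real.pi : ℂ) * Complex.I * ((r i : ℕ) : ℂ) / (n : ℂ)) with hzdef
    have hn0 : (n : ℂ) ≠ 0 := Nat.cast_ne_zero.mpr (by omega)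
    have hsqrt : ((Real.sqrt n : ℝ) : ℂ) ≠ 0 := by
      simp only [ne_eq, Complex.ofReal_eq_zero]
      positivity
    -- z i ^ m = exp(2πI * r i * m / n)
    have hzpow : ∀ (i : Fin ns) (m : ℕ),
        z i ^ m = Complex.exp (2 * (Real.pi : ℂ) * Complex.I * ((r i : ℕ) : ℂ) * (m : ℂ) / (n : ℂ)) := by
      intro i m
      rw [hzdef, ← Complex.exp_nat_mul]
      ring_nf
    have hdft : ∀ (kk : Fin n) (i : Fin ns), dftVec n kk (r i) = z i ^ (kk : ℕ) / ((Real.sqrt n : ℝ) : ℂ) := by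
      intro kk i
      rw [dftVec, hzpow]
    -- z i ^ n = 1
    have hzn : ∀ i, z i ^ n = 1 := by
      intro i
      rw [hzpow]
      have : 2 * (Real.pi : ℂ) * Complex.I * ((r i : ℕ) : ℂ) * (n : ℂ) / (n : ℂ)
          = ((r i : ℕ) : ℤ) * (2 * (Real.pi : ℂ) * Complex.I) := by
        push_cast; field_simp
      rw [this, Complex.exp_int_mul_two_pi_mul_I]
    -- z injective
    have hz_inj : Function.Injective z := by
      intro i j hij
      rw [hzdef] at hij
      simp only [Complex.exp_eq_exp_iff_exists_int] at hij
      obtain ⟨m, hm⟩ := hij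
      have hi := (r i).isLt
      have hj := (r j).isLt
      have hπ : (Real.pi : ℂ) ≠ 0 := Complex.ofReal_ne_zero.mpr Real.pi_ne_zero
      have hI := Complex.I_ne_zero
      have h2πI : (2 * (Real.pi : ℂ) * Complex.I) ≠ 0 := by
        simp [hπ, hI]
      have hmn : ((r i : ℕ) : ℂ) = ((r j : ℕ) : ℂ) + (m : ℂ) * (n : ℂ) := by
        apply mul_left_cancel₀ h2πI
        field_simp at hm
        linear_combination (2 * (Real.pi : ℂ) * Complex.I) * hm
      have hzz : ((r i : ℕ) : ℤ) = ((r j : ℕ) : ℤ) + m * n := by exact_mod_cast hmn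
      have hi' : ((r i : ℕ) : ℤ) < n := by exact_mod_cast hi
      have hj' : ((r j : ℕ) : ℤ) < n := by exact_mod_cast hj
      have hi0 : (0:ℤ) ≤ ((r i : ℕ) : ℤ) := Int.natCast_nonneg _
      have hj0 : (0:ℤ) ≤ ((r j : ℕ) : ℤ) := Int.natCast_nonneg _
      have hn' : (1:ℤ) ≤ (n:ℤ) := by exact_mod_cast hn
      have hm0 : m = 0 := by
        by_contra hm0
        rcases lt_or_gt_of_ne hm0 with h | h
        · have h1 : m ≤ -1 := by omega
          have : m * n ≤ -n := by nlinarith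
          linarith
        · have h1 : (1:ℤ) ≤ m := by omega
          have : (n:ℤ) ≤ m * n := by nlinarith
          linarith
      have hri : (r i : ℕ) = (r j : ℕ) := by
        rw [hm0] at hzz; exact_mod_cast (by linarith : ((r i:ℕ):ℤ) = ((r j:ℕ):ℤ))
      exact hr (Fin.ext hri)
    -- exponent map
    set e : {k : Fin n // k ∈ Kset n ωs} → ℕ := fun k => ((k.1 : ℕ) + c) % n with he
    have he_le : ∀ k, e k ≤ 2 * ωs - 2 := fun k => (Kset_mem_iff n ωs hω h2 k.1).mp k.2
    have he_inj : Function.Injective e := by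
      intro a b hab
      have : ((Equiv.addRight cfin) a.1 : Fin n) = ((Equiv.addRight cfin) b.1 : Fin n) := by
        rw [hEval, hEval]
        exact Fin.ext hab
      exact Subtype.ext ((Equiv.addRight cfin).injective this)
    -- the polynomial
    set P : Polynomial ℂ := ∑ k : {k : Fin n // k ∈ Kset n ωs},
      Polynomial.C (g k) * Polynomial.X ^ (e k) with hP
    have hPdeg : P.natDegree ≤ 2 * ωs - 2 := by
      apply Polynomial.natDegree_sum_le_of_forall_le
      intro k _
      exact (Polynomial.natDegree_C_mul_le _ _).trans (by simp [he_le k])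
    -- evaluations vanish
    have hPeval : ∀ i, P.eval (z i) = 0 := by
      intro i
      have hgi : ∑ k : {k : Fin n // k ∈ Kset n ωs}, g k * z i ^ ((k.1 : ℕ)) = 0 := by
        have := congrFun hg i
        simp only [Finset.sum_apply, Pi.smul_apply, Pi.zero_apply, smul_eq_mul] at this
        have h' : (∑ k : {k : Fin n // k ∈ Kset n ωs}, g k * z i ^ ((k.1 : ℕ)) / ((Real.sqrt n : ℝ) : ℂ)) = 0 := by
          rw [← this]
          exact Finset.sum_congr rfl (fun k _ => by rw [hdft]; ring)
        rw [← Finset.sum_div] at h'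
        exact (div_eq_zero_iff.mp h').resolve_right hsqrt
      have hzmod : ∀ m : ℕ, z i ^ (m % n) = z i ^ m := by
        intro m
        conv_rhs => rw [← Nat.mod_add_div m n]
        rw [pow_add, pow_mul, hzn, one_pow, mul_one]
      rw [hP, Polynomial.eval_finset_sum]
      simp only [Polynomial.eval_mul, Polynomial.eval_C, Polynomial.eval_pow, Polynomial.eval_X]
      calc (∑ k : {k : Fin n // k ∈ Kset n ωs}, g k * z i ^ (e k))
          = ∑ k : {k : Fin n // k ∈ Kset n ωs}, z i ^ c * (g k * z i ^ ((k.1 : ℕ))) := by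
            refine Finset.sum_congr rfl (fun k _ => ?_)
            rw [he]
            simp only
            rw [hzmod, pow_add]
            ring
        _ = z i ^ c * ∑ k : {k : Fin n // k ∈ Kset n ωs}, g k * z i ^ ((k.1 : ℕ)) := by
            rw [Finset.mul_sum]
        _ = 0 := by rw [hgi, mul_zero]
    -- conclude P = 0
    have hP0 : P = 0 := by
      apply Polynomial.eq_zero_of_natDegree_lt_card_of_eval_eq_zero P hz_inj hPeval
      rw [Fintype.card_fin]
      omega
    -- extract coefficient
    have : P.coeff (e k) = g k := by
      rw [hP, Polynomial.finset_sum_coeff]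
      rw [Finset.sum_eq_single k]
      · simp [Polynomial.coeff_C_mul, Polynomial.coeff_X_pow]
      · intro b _ hb
        simp only [Polynomial.coeff_C_mul, Polynomial.coeff_X_pow]
        rw [if_neg (fun h => hb (he_inj h.symm))]
        ring
      · intro hk; exact absurd (Finset.mem_univ k) hk
    rw [hP0] at this
    simpa using this.symm
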